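/- For every disk-polygon D, the Minkowski sum D + D* of D and its dual disk-polygon D* is a convex domain of constant width 2: for every unit vector u, sup{⟪x − y, u⟫ : x, y ∈ D + D*} = 2. -/

import Mathlib

open Metric Real MeasureTheory
open scoped InnerProductSpace Pointwise ENNReal

noncomputable section

/-- The Euclidean plane. -/
abbrev E2 := EuclideanSpace ℝ (Fin 2)

/-- The point of the Euclidean plane with the given coordinates. -/
def pt (a b : ℝ) : E2 := (EuclideanSpace.equiv (Fin 2) ℝ).symm ![a, b]

/-- The width of a set `C` in the direction of the unit vector `u`. -/
def dirWidth (C : Set E2) (u : E2) : ℝ :=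
  sSup {w : ℝ | ∃ x ∈ C, ∃ y ∈ C, w = ⟪x - y, u⟫_ℝ}

/-- The minimal width of a set: the infimum of the directional widths over all
unit vectors. -/
def minWidth (C : Set E2) : ℝ :=
  sInf {w : ℝ | ∃ u : E2, ‖u‖ = 1 ∧ w = dirWidth C u}

/-- The inradius of a set. -/
def inradius (C : Set E2) : ℝ :=
  sSup {r : ℝ | 0 ≤ r ∧ ∃ c : E2, closedBall c r ⊆ C}

/-- The circumradius of a set. -/
def circumradius (C : Set E2) : ℝ :=
  sInf {r : ℝ | 0 ≤ r ∧ ∃ c : E2, C ⊆ closedBall c r}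

/-- The dual disk-polygon of a set `D`. -/
def dualDP (D : Set E2) : Set E2 := {y : E2 | ∀ x ∈ D, dist x y ≤ 1}

lemma real_aux2 {I d t : ℝ} (ht0 : 0 < t) (h : t * I + t * (1 - t) * d ^ 2 / 2 ≤ 0) :
    I ≤ -(1 - t) * d ^ 2 / 2 := by
  nlinarith [mul_pos ht0 ht0]

lemma real_aux {I d : ℝ} (h : ∀ t : ℝ, 0 < t → t < 1 → I ≤ -(1 - t) * d ^ 2 / 2) :
    I ≤ -d ^ 2 / 2 := by
  by_contra hcon
  push_neg at hcon
  have hε0 : 0 < I + d ^ 2 / 2 := by linarith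
  have hden : (0:ℝ) < d ^ 2 + 1 := by positivity
  have ht0 : 0 < min (1/2) ((I + d ^ 2 / 2) / (d ^ 2 + 1)) := by
    apply lt_min (by norm_num) (by positivity)
  have ht1 : min (1/2) ((I + d ^ 2 / 2) / (d ^ 2 + 1)) < 1 :=
    lt_of_le_of_lt (min_le_left _ _) (by norm_num)
  have htd : min (1/2) ((I + d ^ 2 / 2) / (d ^ 2 + 1)) * (d ^ 2 + 1) ≤ I + d ^ 2 / 2 := by
    rw [← le_div_iff₀ hden]
    exact min_le_right _ _
  have hk := h _ ht0 ht1
  set t := min (1/2) ((I + d ^ 2 / 2) / (d ^ 2 + 1)) with ht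
  nlinarith [sq_nonneg d, mul_pos ht0 hden]

lemma real_aux3 {A B J d t : ℝ} (hA : A ≤ 1) (hB : B ≤ 1) (hA0 : 0 ≤ A) (hB0 : 0 ≤ B)
    (ht0 : 0 < t) (ht1 : t < 1)
    (e3 : d ^ 2 = B ^ 2 - 2 * J + A ^ 2) :
    A ^ 2 + 2 * (t * (J - A ^ 2)) + t ^ 2 * d ^ 2 ≤ 1 - t * (1 - t) * d ^ 2 := by
  nlinarith [mul_nonneg (le_of_lt ht0) (by nlinarith : (0:ℝ) ≤ 1 - B ^ 2),
    mul_nonneg (by linarith : (0:ℝ) ≤ 1 - t) (by nlinarith : (0:ℝ) ≤ 1 - A ^ 2)]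

lemma real_aux4 {n s : ℝ} (hn : 0 ≤ n) (hs0 : 0 ≤ s) (h : n ^ 2 ≤ 1 - 2 * s) :
    n ≤ 1 - s := by
  nlinarith

lemma core_lemma {K T : Set E2}
    (hsub : ∀ v ∈ K, ∀ c ∈ T, ‖v - c‖ ≤ 1)
    (hmem : ∀ v : E2, (∀ c ∈ T, ‖v - c‖ ≤ 1) → v ∈ K)
    {u : E2} (hu : ‖u‖ = 1) {x₀ : E2} (hx₀ : x₀ ∈ K)
    (hmax : ∀ x ∈ K, ⟪x, u⟫_ℝ ≤ ⟪x₀, u⟫_ℝ)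
    {z : E2} (hz : z ∈ K) : ‖z - (x₀ - u)‖ ≤ 1 := by
  have key : ∀ t : ℝ, 0 < t → t < 1 →
      ⟪z - x₀, u⟫_ℝ ≤ -(1 - t) * ‖z - x₀‖ ^ 2 / 2 := by
    intro t ht0 ht1
    have hδ0 : (0:ℝ) ≤ t * (1 - t) * ‖z - x₀‖ ^ 2 / 2 := by
      have h1 : (0:ℝ) ≤ 1 - t := by linarith
      positivity
    have hKm : x₀ + t • (z - x₀) + (t * (1 - t) * ‖z - x₀‖ ^ 2 / 2) • u ∈ K := by
      apply hmem
      intro c hc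
      have hA : ‖x₀ - c‖ ≤ 1 := hsub x₀ hx₀ c hc
      have hB : ‖z - c‖ ≤ 1 := hsub z hz c hc
      have hid : x₀ + t • (z - x₀) - c = (x₀ - c) + t • ((z - c) - (x₀ - c)) := by
        rw [show (z - c) - (x₀ - c) = z - x₀ by abel]
        abel
      have e1 : ‖x₀ + t • (z - x₀) - c‖ ^ 2
          = ‖x₀ - c‖ ^ 2 + 2 * (t * ⟪x₀ - c, (z - c) - (x₀ - c)⟫_ℝ)
            + t ^ 2 * ‖(z - c) - (x₀ - c)‖ ^ 2 := by
        rw [hid, norm_add_sq_real, real_inner_smul_right, norm_smul, Real.norm_eq_abs,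
          mul_pow, sq_abs]
      have e2 : ‖(z - c) - (x₀ - c)‖ = ‖z - x₀‖ := by
        rw [show (z - c) - (x₀ - c) = z - x₀ by abel]
      have e3 : ‖z - x₀‖ ^ 2
          = ‖z - c‖ ^ 2 - 2 * ⟪z - c, x₀ - c⟫_ℝ + ‖x₀ - c‖ ^ 2 := by
        rw [← e2, norm_sub_sq_real]
      have e4 : ⟪x₀ - c, (z - c) - (x₀ - c)⟫_ℝ
          = ⟪z - c, x₀ - c⟫_ℝ - ‖x₀ - c‖ ^ 2 := by
        rw [inner_sub_right, real_inner_self_eq_norm_sq, real_inner_comm]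
      have hsq : ‖x₀ + t • (z - x₀) - c‖ ^ 2
          ≤ 1 - 2 * (t * (1 - t) * ‖z - x₀‖ ^ 2 / 2) := by
        rw [e1, e4, e2]
        have := real_aux3 hA hB (norm_nonneg (x₀ - c)) (norm_nonneg (z - c)) ht0 ht1 e3
        linarith
      have hnorm : ‖x₀ + t • (z - x₀) - c‖ ≤ 1 - t * (1 - t) * ‖z - x₀‖ ^ 2 / 2 :=
        real_aux4 (norm_nonneg _) hδ0 hsq
      have htri : ‖x₀ + t • (z - x₀) + (t * (1 - t) * ‖z - x₀‖ ^ 2 / 2) • u - c‖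
          ≤ ‖x₀ + t • (z - x₀) - c‖ + t * (1 - t) * ‖z - x₀‖ ^ 2 / 2 := by
        have hrw : x₀ + t • (z - x₀) + (t * (1 - t) * ‖z - x₀‖ ^ 2 / 2) • u - c
            = (x₀ + t • (z - x₀) - c) + (t * (1 - t) * ‖z - x₀‖ ^ 2 / 2) • u := by abel
        rw [hrw]
        have h2 := norm_add_le (x₀ + t • (z - x₀) - c)
          ((t * (1 - t) * ‖z - x₀‖ ^ 2 / 2) • u)
        rwa [norm_smul, Real.norm_eq_abs, abs_of_nonneg hδ0, hu, mul_one] at h2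
      linarith
    have h6 := hmax _ hKm
    have h7 : ⟪x₀ + t • (z - x₀) + (t * (1 - t) * ‖z - x₀‖ ^ 2 / 2) • u, u⟫_ℝ
        = ⟪x₀, u⟫_ℝ + t * ⟪z - x₀, u⟫_ℝ + t * (1 - t) * ‖z - x₀‖ ^ 2 / 2 := by
      rw [inner_add_left, inner_add_left, real_inner_smul_left, real_inner_smul_left,
        real_inner_self_eq_norm_sq, hu]
      ring
    rw [h7] at h6
    exact real_aux2 ht0 (by linarith)
  have hkey2 : ⟪z - x₀, u⟫_ℝ ≤ -‖z - x₀‖ ^ 2 / 2 := real_aux key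
  have hfin : ‖z - (x₀ - u)‖ ^ 2 ≤ 1 := by
    have hid2 : z - (x₀ - u) = (z - x₀) + u := by abel
    rw [hid2, norm_add_sq_real, hu]
    nlinarith
  nlinarith [norm_nonneg (z - (x₀ - u))]

/-- Sublemma 2 of the paper: for every disk-polygon `D`, the Minkowski sum of `D`
and its dual `D*` is a convex domain of constant width `2`. -/
theorem minkowski_sum_dual_constant_width (S : Finset E2) (hS : S.Nonempty) (D : Set E2)
    (hD : D = ⋂ c ∈ S, closedBall c 1) (hint : (interior D).Nonempty) :
    ∀ u : E2, ‖u‖ = 1 → dirWidth (D + dualDP D) u = 2 := by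
  intro u hu
  -- membership characterizations
  have hDiff : ∀ v : E2, v ∈ D ↔ ∀ c ∈ (S : Set E2), ‖v - c‖ ≤ 1 := by
    intro v
    rw [hD]
    simp only [Set.mem_iInter, mem_closedBall, dist_eq_norm, Finset.mem_coe]
  have hDsub : ∀ v ∈ D, ∀ c ∈ (S : Set E2), ‖v - c‖ ≤ 1 := fun v hv => (hDiff v).mp hv
  have hDmem : ∀ v : E2, (∀ c ∈ (S : Set E2), ‖v - c‖ ≤ 1) → v ∈ D :=
    fun v h => (hDiff v).mpr h
  have hdsub : ∀ v ∈ dualDP D, ∀ c ∈ D, ‖v - c‖ ≤ 1 := by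
    intro v hv c hc
    have := hv c hc
    rwa [dist_eq_norm, norm_sub_rev] at this
  have hdmem : ∀ v : E2, (∀ c ∈ D, ‖v - c‖ ≤ 1) → v ∈ dualDP D := by
    intro v h x hx
    rw [dist_eq_norm, norm_sub_rev]
    exact h x hx
  -- compactness / nonemptiness
  have hDne : D.Nonempty := hint.mono interior_subset
  obtain ⟨c₀, hc₀S⟩ := hS
  have hc₀dual : c₀ ∈ dualDP D := by
    intro x hx
    rw [dist_eq_norm]
    exact hDsub x hx c₀ (by exact_mod_cast hc₀S)
  have hDclosed : IsClosed D := by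
    rw [hD]
    exact isClosed_biInter fun c _ => isClosed_closedBall
  have hDbdd : Bornology.IsBounded D := by
    apply (isBounded_closedBall (x := c₀) (r := 1)).subset
    intro v hv
    rw [mem_closedBall, dist_eq_norm]
    exact hDsub v hv c₀ (by exact_mod_cast hc₀S)
  have hDcp : IsCompact D := Metric.isCompact_of_isClosed_isBounded hDclosed hDbdd
  obtain ⟨z₀, hz₀⟩ := id hDne
  have hdclosed : IsClosed (dualDP D) := by
    have : dualDP D = ⋂ x ∈ D, closedBall x 1 := by
      ext y
      simp only [dualDP, Set.mem_setOf_eq, Set.mem_iInter, mem_closedBall, dist_comm]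
    rw [this]
    exact isClosed_biInter fun c _ => isClosed_closedBall
  have hdbdd : Bornology.IsBounded (dualDP D) := by
    apply (isBounded_closedBall (x := z₀) (r := 1)).subset
    intro v hv
    rw [mem_closedBall, dist_eq_norm]
    exact hdsub v hv z₀ hz₀
  have hdcp : IsCompact (dualDP D) := Metric.isCompact_of_isClosed_isBounded hdclosed hdbdd
  -- maximizers
  have hcont : Continuous fun x : E2 => ⟪x, u⟫_ℝ :=
    Continuous.inner continuous_id continuous_const
  obtain ⟨x₀, hx₀D, hx₀m⟩ := hDcp.exists_isMaxOn hDne hcont.continuousOn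
  obtain ⟨y₀, hy₀D, hy₀m⟩ := hdcp.exists_isMaxOn ⟨c₀, hc₀dual⟩ hcont.continuousOn
  -- the two extreme points of the dual side
  have hm₁ : x₀ - u ∈ dualDP D := by
    intro x hx
    rw [dist_eq_norm]
    exact core_lemma hDsub hDmem hu hx₀D (fun x hx => hx₀m hx) hx
  have hm₂ : y₀ - u ∈ D := by
    apply hDmem
    intro c hc
    have hcdual : c ∈ dualDP D := by
      intro x hx
      rw [dist_eq_norm]
      exact hDsub x hx c hc
    have := core_lemma hdsub hdmem hu hy₀D (fun x hx => hy₀m hx) hcdual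
    rwa [norm_sub_rev] at this
  -- compute the width
  have h2mem : (2:ℝ) ∈ {w : ℝ | ∃ x ∈ D + dualDP D, ∃ y ∈ D + dualDP D, w = ⟪x - y, u⟫_ℝ} := by
    refine ⟨x₀ + y₀, Set.add_mem_add hx₀D hy₀D,
      (y₀ - u) + (x₀ - u), Set.add_mem_add hm₂ hm₁, ?_⟩
    have hrw : (x₀ + y₀) - ((y₀ - u) + (x₀ - u)) = u + u := by abel
    rw [hrw, inner_add_left, real_inner_self_eq_norm_sq, hu]
    norm_num
  have hub : ∀ w ∈ {w : ℝ | ∃ x ∈ D + dualDP D, ∃ y ∈ D + dualDP D, w = ⟪x - y, u⟫_ℝ},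
      w ≤ 2 := by
    rintro w ⟨x, hx, y, hy, rfl⟩
    obtain ⟨a, ha, b, hb, rfl⟩ := Set.mem_add.mp hx
    obtain ⟨a', ha', b', hb', rfl⟩ := Set.mem_add.mp hy
    have hrw : (a + b) - (a' + b') = (a - b') + (b - a') := by abel
    rw [hrw, inner_add_left]
    have h1 : ⟪a - b', u⟫_ℝ ≤ 1 := by
      calc ⟪a - b', u⟫_ℝ ≤ ‖a - b'‖ * ‖u‖ := real_inner_le_norm _ _
      _ = ‖a - b'‖ := by rw [hu, mul_one]
      _ ≤ 1 := by rw [← dist_eq_norm]; exact hb' a ha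
    have h2 : ⟪b - a', u⟫_ℝ ≤ 1 := by
      calc ⟪b - a', u⟫_ℝ ≤ ‖b - a'‖ * ‖u‖ := real_inner_le_norm _ _
      _ = ‖b - a'‖ := by rw [hu, mul_one]
      _ ≤ 1 := by rw [norm_sub_rev, ← dist_eq_norm]; exact hb a' ha'
    linarith
  exact le_antisymm (csSup_le ⟨2, h2mem⟩ hub) (le_csSup ⟨2, hub⟩ h2mem)
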